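/- Let a, b ∈ O_F ∩ U_m satisfy a ≡ b (mod P_{m+1}) and N(a − b) < N(P_{m+1})². Then a/b ∈ U′₁. -/
import Mathlib


open IntermediateField NumberField

noncomputable section

set_option maxHeartbeats 1000000
set_option synthInstance.maxHeartbeats 1000000

/-- `β = i·√(D + B√D)` (positive real square roots). -/
def qβ (B D : ℕ) : ℂ :=
  Complex.I * ((Real.sqrt ((D : ℝ) + (B : ℝ) * Real.sqrt (D : ℝ)) : ℝ) : ℂ)

/-- The imaginary cyclic quartic field `F = ℚ(β) = ℚ(√(−(D + B√D))) ⊆ ℂ`. -/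
def qF (B D : ℕ) : IntermediateField ℚ ℂ := ℚ⟮qβ B D⟯

open Polynomial in
lemma qβ_isIntegral (B D : ℕ) : IsIntegral ℚ (qβ B D) := by
  have hs : (0:ℝ) ≤ (D : ℝ) + (B : ℝ) * Real.sqrt (D : ℝ) := by positivity
  have h2 : (qβ B D) ^ 2 = -(((D : ℝ) + (B : ℝ) * Real.sqrt (D : ℝ) : ℝ) : ℂ) := by
    rw [qβ, mul_pow, Complex.I_sq, ← Complex.ofReal_pow, Real.sq_sqrt hs]
    ring
  have htc : ((Real.sqrt (D:ℝ) : ℝ) : ℂ) ^ 2 = (D:ℂ) := by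
    rw [← Complex.ofReal_pow, Real.sq_sqrt (by positivity)]; norm_num
  refine ⟨X ^ 4 + (C ((2*D : ℚ)) * X ^ 2 + C ((D:ℚ)^2 - (B:ℚ)^2 * D)), ?_, ?_⟩
  · apply Polynomial.monic_X_pow_add
    refine lt_of_le_of_lt (b := (2 : WithBot ℕ)) ?_ (by norm_num)
    compute_degree
  · simp only [eval₂_add, eval₂_mul, eval₂_pow, eval₂_X, eval₂_C]
    have hβ4 : (qβ B D) ^ 4 = ((((D : ℝ) + (B : ℝ) * Real.sqrt (D : ℝ) : ℝ) : ℂ)) ^ 2 := by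
      rw [show (4:ℕ) = 2*2 by norm_num, pow_mul, h2]; ring
    rw [hβ4, h2]
    push_cast
    norm_num
    linear_combination (B:ℂ)^2 * htc

instance qF.finiteDimensional (B D : ℕ) : FiniteDimensional ℚ (qF B D) :=
  IntermediateField.adjoin.finiteDimensional (qβ_isIntegral B D)

instance qF.numberField (B D : ℕ) : NumberField (qF B D) := ⟨⟩


/-- `x` is an `S`-unit of `F`: `x ≠ 0` and `x` has valuation zero at every nonzero prime
ideal of `O_F` not belonging to `S` (equivalently, at every such prime `P`, `x` can be
written as a quotient `u/v` of elements of `O_F` that both lie outside `P`). -/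
def IsSUnit {B D : ℕ} (S : Set (Ideal (𝓞 (qF B D)))) (x : qF B D) : Prop :=
  x ≠ 0 ∧ ∀ P : Ideal (𝓞 (qF B D)), P.IsPrime → P ≠ ⊥ → P ∉ S →
    ∃ u v : 𝓞 (qF B D), u ∉ P ∧ v ∉ P ∧ x * (v : qF B D) = (u : qF B D)

lemma IsSUnit.div' {B D : ℕ} {S : Set (Ideal (𝓞 (qF B D)))} {x y : qF B D}
    (hx : IsSUnit S x) (hy : IsSUnit S y) : IsSUnit S (x / y) := by
  refine ⟨div_ne_zero hx.1 hy.1, fun Q hQ hQb hQS => ?_⟩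
  obtain ⟨u, v, hu, hv, hxv⟩ := hx.2 Q hQ hQb hQS
  obtain ⟨u', v', hu', hv', hyv⟩ := hy.2 Q hQ hQb hQS
  refine ⟨u * v', v * u', fun h => ((hQ.mem_or_mem h).elim hu hv'),
    fun h => ((hQ.mem_or_mem h).elim hv hu'), ?_⟩
  have h1 : ((u * v' : 𝓞 (qF B D)) : qF B D) = (u : qF B D) * v' := map_mul _ _ _
  have h2 : ((v * u' : 𝓞 (qF B D)) : qF B D) = (v : qF B D) * u' := map_mul _ _ _
  have hv'' : (u' : qF B D) / y = v' := by rw [← hyv]; exact mul_div_cancel_left₀ _ hy.1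
  rw [h1, h2]
  calc x / y * ((v : qF B D) * u') = (x * v) * ((u' : qF B D) / y) := by ring
    _ = (u : qF B D) * v' := by rw [hxv, hv'']


/-- (`P` enumerates the nonzero prime ideals of `O_F` with nondecreasing
norms, indexed by `1, 2, …`; `S_m = {P 1, …, P m}`, `U_m` is the group of `S_m`-units, `π`
generates `P (m+1)`, and `U′₁` is the subgroup of `F^×` generated by `(1 + π·U_m) ∩ U_m`;
the class number of `F` is `1`.) If `a, b ∈ O_F ∩ U_m` satisfy `a ≡ b (mod P (m+1))` and
`N(a − b) < N(P (m+1))²`, then `a/b ∈ U′₁`. -/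
theorem statement12 (B C D : ℕ) (hB : 0 < B) (hC : 0 < C) (hD : D = B ^ 2 + C ^ 2)
    (hsf : Squarefree D)
    (hPID : ∀ I : Ideal (𝓞 (qF B D)), I.IsPrincipal)
    (P : ℕ → Ideal (𝓞 (qF B D)))
    (hPprime : ∀ i, 1 ≤ i → (P i).IsPrime ∧ P i ≠ ⊥)
    (hPinj : ∀ i j, 1 ≤ i → 1 ≤ j → P i = P j → i = j)
    (hPsurj : ∀ Q : Ideal (𝓞 (qF B D)), Q.IsPrime → Q ≠ ⊥ → ∃ i, 1 ≤ i ∧ P i = Q)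
    (hPmono : ∀ i j, 1 ≤ i → i ≤ j →
      Nat.card (𝓞 (qF B D) ⧸ P i) ≤ Nat.card (𝓞 (qF B D) ⧸ P j))
    (m : ℕ)
    (π : 𝓞 (qF B D)) (hπ : P (m + 1) = Ideal.span {π})
    (a b : 𝓞 (qF B D))
    (ha : IsSUnit {Q | ∃ i, 1 ≤ i ∧ i ≤ m ∧ Q = P i} ((a : qF B D)))
    (hb : IsSUnit {Q | ∃ i, 1 ≤ i ∧ i ≤ m ∧ Q = P i} ((b : qF B D)))
    (hmod : a - b ∈ P (m + 1))
    (hN : |(Algebra.norm ℚ ((a : qF B D) - (b : qF B D)) : ℚ)| <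
      ((Nat.card (𝓞 (qF B D) ⧸ P (m + 1)) : ℚ)) ^ 2) :
    ∃ u : (qF B D)ˣ,
      u ∈ Subgroup.closure {u : (qF B D)ˣ |
        IsSUnit {Q | ∃ i, 1 ≤ i ∧ i ≤ m ∧ Q = P i} ((u : qF B D)) ∧
        ∃ w : qF B D, IsSUnit {Q | ∃ i, 1 ≤ i ∧ i ≤ m ∧ Q = P i} w ∧
          (u : qF B D) = 1 + (π : qF B D) * w} ∧
      (u : qF B D) = (a : qF B D) / (b : qF B D) := by
  classical
  have ha0 : (a : qF B D) ≠ 0 := ha.1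
  have hb0 : (b : qF B D) ≠ 0 := hb.1
  by_cases hab : a = b
  · subst hab
    exact ⟨1, Subgroup.one_mem _, by rw [Units.val_one, div_self hb0]⟩
  obtain ⟨hPp, hPb⟩ := hPprime (m + 1) (by omega)
  have hxne : a - b ≠ 0 := sub_ne_zero.mpr hab
  set nP := Ideal.absNorm (P (m + 1)) with hnP
  set nI := Ideal.absNorm (Ideal.span {a - b}) with hnI
  have hcard : Nat.card (𝓞 (qF B D) ⧸ P (m + 1)) = nP :=
    ((Ideal.absNorm_apply _).trans (Submodule.cardQuot_apply _)).symm
  have hnI0 : nI ≠ 0 := by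
    rw [hnI, Ne, Ideal.absNorm_eq_zero_iff, Ideal.span_singleton_eq_bot]
    exact hxne
  have hnormcast : |(Algebra.norm ℚ ((a : qF B D) - (b : qF B D)))| = (nI : ℚ) := by
    have h1 : ((a : qF B D) - (b : qF B D)) = ((a - b : 𝓞 (qF B D)) : qF B D) :=
      (map_sub (algebraMap (𝓞 (qF B D)) (qF B D)) a b).symm
    rw [h1, ← Algebra.coe_norm_int, hnI, Ideal.absNorm_span_singleton, Nat.cast_natAbs]
    exact Int.cast_abs.symm
  rw [hcard] at hN
  have hNnat : nI < nP ^ 2 := by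
    rw [hnormcast] at hN
    exact_mod_cast hN
  have hmax : (P (m + 1)).IsMaximal := hPp.isMaximal hPb
  have hdvdP : P (m + 1) ∣ Ideal.span {a - b} := Ideal.dvd_span_singleton.mpr hmod
  have key : ∀ Q : Ideal (𝓞 (qF B D)), Q.IsPrime → Q ≠ ⊥ →
      Q ∉ {Q | ∃ i, 1 ≤ i ∧ i ≤ m ∧ Q = P i} → Q ≠ P (m + 1) → a - b ∉ Q := by
    intro Q hQ hQb hQS hQP habQ
    obtain ⟨j, hj1, hjP⟩ := hPsurj Q hQ hQb
    have hjm : ¬(j ≤ m) := fun h => hQS ⟨j, hj1, h, hjP.symm⟩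
    have hjm1 : j ≠ m + 1 := fun h => hQP (by rw [← hjP, h])
    have hle : nP ≤ Ideal.absNorm Q := by
      have h := hPmono (m + 1) j (by omega) (by omega)
      rw [hjP] at h
      rw [hcard] at h
      rwa [← (Ideal.absNorm_apply Q).trans (Submodule.cardQuot_apply _)] at h
    have hcop : IsCoprime (P (m + 1)) Q :=
      (Ideal.isCoprime_iff_sup_eq).mpr (hmax.coprime_of_ne (hQ.isMaximal hQb) (Ne.symm hQP))
    have hdvd : P (m + 1) * Q ∣ Ideal.span {a - b} :=
      hcop.mul_dvd hdvdP (Ideal.dvd_span_singleton.mpr habQ)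
    have hdvdn : nP * Ideal.absNorm Q ∣ nI := by
      rw [hnI, hnP, ← map_mul Ideal.absNorm]
      exact Ideal.absNorm_dvd_absNorm_of_le (Ideal.le_of_dvd hdvd)
    have hle2 : nP * Ideal.absNorm Q ≤ nI := Nat.le_of_dvd (Nat.pos_of_ne_zero hnI0) hdvdn
    have hle3 : nP * nP ≤ nP * Ideal.absNorm Q := Nat.mul_le_mul_left _ hle
    nlinarith [hNnat]
  have hnot2 : a - b ∉ P (m + 1) * P (m + 1) := by
    intro h
    have hdvd : P (m + 1) * P (m + 1) ∣ Ideal.span {a - b} := Ideal.dvd_span_singleton.mpr h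
    have hdvdn : nP * nP ∣ nI := by
      rw [hnI, hnP, ← map_mul Ideal.absNorm]
      exact Ideal.absNorm_dvd_absNorm_of_le (Ideal.le_of_dvd hdvd)
    have hle2 := Nat.le_of_dvd (Nat.pos_of_ne_zero hnI0) hdvdn
    nlinarith [hNnat]
  obtain ⟨t, ht⟩ : π ∣ a - b := by
    rw [hπ, Ideal.mem_span_singleton] at hmod
    exact hmod
  have ht0 : t ≠ 0 := by
    rintro rfl
    rw [mul_zero] at ht
    exact hxne ht
  have htQ : ∀ Q : Ideal (𝓞 (qF B D)), Q.IsPrime → Q ≠ ⊥ →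
      Q ∉ {Q | ∃ i, 1 ≤ i ∧ i ≤ m ∧ Q = P i} → t ∉ Q := by
    intro Q hQ hQb hQS htmem
    by_cases hQP : Q = P (m + 1)
    · apply hnot2
      rw [ht]
      exact Ideal.mul_mem_mul (by rw [hπ]; exact Ideal.mem_span_singleton_self π)
        (hQP ▸ htmem)
    · exact key Q hQ hQb hQS hQP (ht ▸ Q.mul_mem_left π htmem)
  have ht0' : (t : qF B D) ≠ 0 := RingOfIntegers.coe_ne_zero_iff.mpr ht0
  have hw : IsSUnit {Q | ∃ i, 1 ≤ i ∧ i ≤ m ∧ Q = P i} ((t : qF B D) / (b : qF B D)) := by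
    refine ⟨div_ne_zero ht0' hb0, fun Q hQ hQb hQS => ?_⟩
    obtain ⟨u', v', hu', hv', hbv⟩ := hb.2 Q hQ hQb hQS
    refine ⟨t * v', u', fun h => (hQ.mem_or_mem h).elim (htQ Q hQ hQb hQS) hv', hu', ?_⟩
    have h1 : ((t * v' : 𝓞 (qF B D)) : qF B D) = (t : qF B D) * v' :=
      map_mul (algebraMap (𝓞 (qF B D)) (qF B D)) t v'
    have hv'' : (u' : qF B D) / (b : qF B D) = v' := by
      rw [← hbv]; exact mul_div_cancel_left₀ _ hb0
    rw [h1]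
    calc (t : qF B D) / (b : qF B D) * u'
        = (t : qF B D) * ((u' : qF B D) / (b : qF B D)) := by ring
      _ = (t : qF B D) * v' := by rw [hv'']
  have hcoe : (a : qF B D) - (b : qF B D) = (π : qF B D) * (t : qF B D) := by
    have h := congrArg (algebraMap (𝓞 (qF B D)) (qF B D)) ht
    rwa [map_sub, map_mul] at h
  have hdiv : (a : qF B D) / (b : qF B D)
      = 1 + (π : qF B D) * ((t : qF B D) / (b : qF B D)) := by
    field_simp
    linear_combination hcoe
  refine ⟨Units.mk0 _ (div_ne_zero ha0 hb0), Subgroup.subset_closure ?_, rfl⟩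
  refine ⟨?_, (t : qF B D) / (b : qF B D), hw, ?_⟩
  · rw [Units.val_mk0]
    exact IsSUnit.div' ha hb
  · rw [Units.val_mk0]
    exact hdiv
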